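/- In the additive setting below with ρ = ρ₊, assume either (a) φ(t,0) = 0 = φ(0,t) for all real t ≥ 0, or (b) for every real a > 0, φ(t,a) → ∞ and φ(a,t) → ∞ as the real number t → ∞. If y₀ ∈ Ch(ℬ) and x₀ ∈ Ch(𝒜) satisfy I¹_{y₀} ∩ Ch(𝒜) = {x₀}, then |Tf(y₀)| = |f(x₀)| for every f ∈ A. -/

import Mathlib

open scoped ZeroAtInfty Pointwise
open Filter Topology

set_option maxHeartbeats 1000000
set_option synthInstance.maxHeartbeats 1000000

/-- The (inc) property for a two-variable function `φ : ℂ → ℂ → ℝ`. -/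
def IncProp (φ : ℂ → ℂ → ℝ) : Prop :=
  (∀ s₁ s₂ t : ℂ, ‖s₁‖ ≤ ‖s₂‖ →
      φ s₁ t ≤ φ s₂ t ∧ φ t s₁ ≤ φ t s₂) ∧
  (∀ s₁ s₂ t : ℂ, ‖s₁‖ < ‖s₂‖ → t ≠ 0 →
      φ s₁ t < φ s₂ t ∧ φ t s₁ < φ t s₂)

/-- The (con) property. -/
def ConProp (φ : ℂ → ℂ → ℝ) : Prop :=
  ∀ (n : ℕ), 0 < n → ∀ (s : Fin n → ℂ) (t : ℂ),
    φ ((1 / (n : ℂ)) * ∑ i, s i) t ≤ (1 / (n : ℝ)) * ∑ i, φ (s i) t ∧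
    φ t ((1 / (n : ℂ)) * ∑ i, s i) ≤ (1 / (n : ℝ)) * ∑ i, φ t (s i)

/-- sup of φ(f,g) over the space (the supremum norm of the nonnegative function φ(f,g)). -/
noncomputable def supPhi {X : Type*} (φ : ℂ → ℂ → ℝ) (f g : X → ℂ) : ℝ :=
  ⨆ x, φ (f x) (g x)

noncomputable def rhoPlus {X : Type*} (φ : ℂ → ℂ → ℝ) (f g : X → ℂ) : ℝ :=
  supPhi φ f g + supPhi φ g f

noncomputable def rhoMax {X : Type*} (φ : ℂ → ℂ → ℝ) (f g : X → ℂ) : ℝ :=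
  max (supPhi φ f g) (supPhi φ g f)

noncomputable def rhoPlusScalar (φ : ℂ → ℂ → ℝ) (r s : ℂ) : ℝ := φ r s + φ s r

noncomputable def rhoMaxScalar (φ : ℂ → ℂ → ℝ) (r s : ℂ) : ℝ := max (φ r s) (φ s r)

/-- Generic ρ, with a Boolean selecting between ρ₊ (true) and ρ_max (false). -/
noncomputable def rhoGen {X : Type*} (c : Bool) (φ : ℂ → ℂ → ℝ) (f g : X → ℂ) : ℝ :=
  if c then rhoPlus φ f g else rhoMax φ f g

noncomputable def rhoGenScalar (c : Bool) (φ : ℂ → ℂ → ℝ) (r s : ℂ) : ℝ :=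
  if c then rhoPlusScalar φ r s else rhoMaxScalar φ r s

/-- `x₀` is a strong boundary point of `A ⊆ C₀(X)`. -/
def IsStrongBoundaryPoint {X : Type*} [TopologicalSpace X]
    (A : Set C₀(X, ℂ)) (x₀ : X) : Prop :=
  ∀ ε > (0 : ℝ), ∀ V ∈ 𝓝 x₀, ∃ f ∈ A, f x₀ = 1 ∧ ‖f‖ = 1 ∧
    ∀ x ∉ V, ‖f x‖ < ε

/-- V_{x₀}(A). -/
def Vset {X : Type*} [TopologicalSpace X] (A : Set C₀(X, ℂ)) (x₀ : X) : Set C₀(X, ℂ) :=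
  {f ∈ A | f x₀ = 1 ∧ ‖f‖ = 1}

/-- F_{x₀}(A). -/
def Fset {X : Type*} [TopologicalSpace X] (A : Set C₀(X, ℂ)) (x₀ : X) : Set C₀(X, ℂ) :=
  {f ∈ A | ‖f x₀‖ = 1 ∧ ‖f‖ = 1}

/-- The maximum modulus set M(f). -/
def maxSet {X : Type*} [TopologicalSpace X] (f : C₀(X, ℂ)) : Set X :=
  {x | ‖f x‖ = ‖f‖}

/-- The topological dual of a normed space (the old Mathlib `NormedSpace.Dual`, since removed). -/
abbrev NormedSpace.Dual (𝕜 : Type*) [NontriviallyNormedField 𝕜] (E : Type*)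
    [SeminormedAddCommGroup E] [NormedSpace 𝕜 E] : Type _ :=
  E →L[𝕜] 𝕜

/-- Evaluation at a point, as a continuous linear functional on a subspace of C₀(X). -/
noncomputable def evalDual {X : Type*} [TopologicalSpace X]
    (𝒜 : Submodule ℂ C₀(X, ℂ)) (x : X) : NormedSpace.Dual ℂ 𝒜 :=
  LinearMap.mkContinuous
    { toFun := fun f => (f : C₀(X, ℂ)) x
      map_add' := fun f g => rfl
      map_smul' := fun c f => rfl }
    1
    (fun f => by
      rw [one_mul]
      exact ((f : C₀(X, ℂ)).toBCF.norm_coe_le_norm x).trans_eq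
        ZeroAtInftyContinuousMap.norm_toBCF_eq_norm)

/-- `x` lies in the Choquet boundary of a subspace `𝒜` of `C₀(X)`: the evaluation functional is
an extreme point of the closed unit ball of the dual space. -/
def InChoquetBoundary {X : Type*} [TopologicalSpace X]
    (𝒜 : Submodule ℂ C₀(X, ℂ)) (x : X) : Prop :=
  evalDual 𝒜 x ∈
    Set.extremePoints ℝ (Metric.closedBall (0 : NormedSpace.Dual ℂ 𝒜) 1)

/-- A function algebra on `X`: a closed subalgebra of `C₀(X)` strongly separating points. -/
def IsFunctionAlgebra {X : Type*} [TopologicalSpace X]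
    (𝒜 : NonUnitalSubalgebra ℂ C₀(X, ℂ)) : Prop :=
  IsClosed (𝒜 : Set C₀(X, ℂ)) ∧
  (∀ x y : X, x ≠ y → ∃ f ∈ 𝒜, f x ≠ f y) ∧
  (∀ x : X, ∃ g ∈ 𝒜, g x ≠ (0 : ℂ))

/-- `|A| ⊆ |𝒜|`. -/
def ModulusSubset {X : Type*} [TopologicalSpace X]
    (A 𝒜 : Set C₀(X, ℂ)) : Prop :=
  ∀ f ∈ A, ∃ g ∈ 𝒜, ∀ x, ‖f x‖ = ‖g x‖

/-- The positive elements of a subset `S` of `C₀(X)`. -/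
def posPart {X : Type*} [TopologicalSpace X] (S : Set C₀(X, ℂ)) : Set C₀(X, ℂ) :=
  {f ∈ S | ∀ x, ∃ r : ℝ, 0 ≤ r ∧ f x = r}


namespace Stmt13Aux

variable {φ : ℂ → ℂ → ℝ}

theorem mono1 (hinc : IncProp φ) {a a' : ℂ} (b : ℂ)
    (h : ‖a‖ ≤ ‖a'‖) : φ a b ≤ φ a' b :=
  (hinc.1 a a' b h).1

theorem mono2 (hinc : IncProp φ) (a : ℂ) {b b' : ℂ}
    (h : ‖b‖ ≤ ‖b'‖) : φ a b ≤ φ a b' :=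
  (hinc.1 b b' a h).2

theorem strict1 (hinc : IncProp φ) {a a' : ℂ} {b : ℂ}
    (h : ‖a‖ < ‖a'‖) (hb : b ≠ 0) : φ a b < φ a' b :=
  (hinc.2 a a' b h hb).1

theorem strict2 (hinc : IncProp φ) {a : ℂ} {b b' : ℂ}
    (h : ‖b‖ < ‖b'‖) (ha : a ≠ 0) : φ a b < φ a b' :=
  (hinc.2 b b' a h ha).2

theorem phi_congr (hinc : IncProp φ) {a a' b b' : ℂ}
    (h1 : ‖a‖ = ‖a'‖) (h2 : ‖b‖ = ‖b'‖) :
    φ a b = φ a' b' :=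
  le_antisymm ((mono1 hinc b h1.le).trans (mono2 hinc a' h2.le))
    ((mono1 hinc b' h1.ge).trans (mono2 hinc a h2.ge))

theorem absR {r : ℝ} (hr : 0 ≤ r) : ‖(r : ℂ)‖ = r := by
  rw [Complex.norm_real, Real.norm_eq_abs, abs_of_nonneg hr]

theorem supPhi_le {Z : Type*} [Nonempty Z] {F G : Z → ℂ} {c : ℝ}
    (h : ∀ z, φ (F z) (G z) ≤ c) : supPhi φ F G ≤ c :=
  ciSup_le h

theorem le_supPhi {Z : Type*} {F G : Z → ℂ} {c : ℝ}
    (h : ∀ z, φ (F z) (G z) ≤ c) (z : Z) : φ (F z) (G z) ≤ supPhi φ F G :=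
  le_ciSup ⟨c, by rintro _ ⟨x, rfl⟩; exact h x⟩ z

theorem abs_le_norm {Z : Type*} [TopologicalSpace Z] (f : C₀(Z, ℂ)) (z : Z) :
    ‖f z‖ ≤ ‖f‖ := by
  exact (f.toBCF.norm_coe_le_norm z).trans_eq ZeroAtInftyContinuousMap.norm_toBCF_eq_norm

theorem exists_abs_gt {Z : Type*} [TopologicalSpace Z] [Nonempty Z] (f : C₀(Z, ℂ)) {c : ℝ}
    (h : c < ‖f‖) : ∃ z, c < ‖f z‖ := by
  have hn : ‖f‖ = ⨆ z, ‖f z‖ := by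
    rw [← ZeroAtInftyContinuousMap.norm_toBCF_eq_norm,
      BoundedContinuousFunction.norm_eq_iSup_norm]
    rfl
  rw [hn] at h
  obtain ⟨z, hz⟩ := exists_lt_of_lt_ciSup h
  exact ⟨z, by exact hz⟩

/-- sup of φ(f,f) equals φ(‖f‖,‖f‖). -/
theorem supPhi_self {Z : Type*} [TopologicalSpace Z] [Nonempty Z]
    (hφc : Continuous fun p : ℂ × ℂ => φ p.1 p.2) (hinc : IncProp φ) (f : C₀(Z, ℂ)) :
    supPhi φ (fun z => f z) (fun z => f z) = φ (‖f‖ : ℂ) (‖f‖ : ℂ) := by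
  have habs : ‖(‖f‖ : ℂ)‖ = ‖f‖ := absR (norm_nonneg f)
  have hcap : ∀ z, φ (f z) (f z) ≤ φ (‖f‖ : ℂ) (‖f‖ : ℂ) := fun z =>
    (mono1 hinc _ ((abs_le_norm f z).trans_eq habs.symm)).trans
      (mono2 hinc _ ((abs_le_norm f z).trans_eq habs.symm))
  refine le_antisymm (supPhi_le hcap) ?_
  rcases eq_or_lt_of_le (norm_nonneg f) with h0 | hpos
  · obtain ⟨z⟩ := ‹Nonempty Z›
    have hz : ‖f z‖ = ‖f‖ := le_antisymm (abs_le_norm f z)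
      (by rw [← h0]; exact norm_nonneg _)
    calc φ (‖f‖ : ℂ) (‖f‖ : ℂ) = φ (f z) (f z) :=
          phi_congr hinc (by rw [habs, hz]) (by rw [habs, hz])
      _ ≤ _ := le_supPhi hcap z
  · have hset : IsClosed {a : ℝ | φ (a : ℂ) (a : ℂ) ≤ supPhi φ (fun z => f z) fun z => f z} :=
      isClosed_le (hφc.comp (Complex.continuous_ofReal.prodMk Complex.continuous_ofReal))
        continuous_const
    have hsub : Set.Ico (0 : ℝ) ‖f‖ ⊆
        {a : ℝ | φ (a : ℂ) (a : ℂ) ≤ supPhi φ (fun z => f z) fun z => f z} := by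
      rintro a ⟨ha0, ha⟩
      obtain ⟨z, hz⟩ := exists_abs_gt f ha
      have h1 : ‖(a : ℂ)‖ ≤ ‖f z‖ := (absR ha0).le.trans hz.le
      exact ((mono1 hinc _ h1).trans (mono2 hinc _ h1)).trans (le_supPhi hcap z)
    have hmem : ‖f‖ ∈ closure (Set.Ico (0 : ℝ) ‖f‖) := by
      rw [closure_Ico hpos.ne]
      exact ⟨hpos.le, le_rfl⟩
    exact hset.closure_subset (closure_mono hsub hmem)

/-- Attainment lemma. -/
theorem attain {Z : Type*} [TopologicalSpace Z] [Nonempty Z]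
    (hφc : Continuous fun p : ℂ × ℂ => φ p.1 p.2) (hinc : IncProp φ)
    (F G : C₀(Z, ℂ)) {t : ℝ} (ht : 0 < t)
    (hF : ∀ z, ‖F z‖ ≤ t) (hG : ∀ z, ‖G z‖ ≤ 1)
    (hsup : supPhi φ (fun z => F z) (fun z => G z) = φ (t : ℂ) 1) :
    ∃ z, ‖F z‖ = t ∧ ‖G z‖ = 1 := by
  set c := φ (t : ℂ) 1 with hc
  have htC : ‖(t : ℂ)‖ = t := absR ht.le
  have htne : (t : ℂ) ≠ 0 := by
    simpa using ht.ne'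
  have hcap : ∀ z, φ (F z) (G z) ≤ c := fun z =>
    (mono1 hinc _ ((hF z).trans_eq htC.symm)).trans
      (mono2 hinc _ ((hG z).trans_eq (by simp)))
  have h00 : φ 0 0 < c := by
    calc φ 0 0 ≤ φ 0 1 := mono2 hinc _ (by simp)
      _ < c := strict1 hinc (by simpa [htC] using ht.ne') one_ne_zero
  set β := (φ 0 0 + c) / 2 with hβ
  have hβ1 : φ 0 0 < β := by simp only [hβ]; linarith
  have hβ2 : β < c := by simp only [hβ]; linarith
  -- find η such that |a|,|b| < η implies φ a b < β
  have hop : IsOpen ((fun p : ℂ × ℂ => φ p.1 p.2) ⁻¹' Set.Iio β) :=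
    isOpen_Iio.preimage hφc
  have h0mem : ((0 : ℂ), (0 : ℂ)) ∈ (fun p : ℂ × ℂ => φ p.1 p.2) ⁻¹' Set.Iio β := hβ1
  obtain ⟨η, hη0, hηsub⟩ := Metric.isOpen_iff.mp hop _ h0mem
  have hsmall : ∀ z, ‖F z‖ < η → ‖G z‖ < η → φ (F z) (G z) < β := by
    intro z h1 h2
    have : (F z, G z) ∈ Metric.ball ((0 : ℂ), (0 : ℂ)) η := by
      rw [Metric.mem_ball, Prod.dist_eq]
      simp only [dist_zero_right]
      exact max_lt h1 h2
    exact hηsub this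
  -- cocompact
  have hWF : {z | ‖F z‖ < η} ∈ cocompact Z := by
    have h := zero_at_infty F (Metric.ball_mem_nhds (0 : ℂ) hη0)
    refine Filter.mem_of_superset h ?_
    intro z hz
    simpa [Metric.mem_ball, dist_zero_right] using hz
  have hWG : {z | ‖G z‖ < η} ∈ cocompact Z := by
    have h := zero_at_infty G (Metric.ball_mem_nhds (0 : ℂ) hη0)
    refine Filter.mem_of_superset h ?_
    intro z hz
    simpa [Metric.mem_ball, dist_zero_right] using hz
  obtain ⟨K, hKc, hKsub⟩ := mem_cocompact.mp (Filter.inter_mem hWF hWG)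
  have houtside : ∀ z ∉ K, φ (F z) (G z) < β := by
    intro z hz
    have hzW := hKsub hz
    exact hsmall z hzW.1 hzW.2
  have hKne : K.Nonempty := by
    by_contra hKe
    rw [Set.not_nonempty_iff_eq_empty] at hKe
    have : c ≤ β := hsup ▸ supPhi_le (fun z => (houtside z (by simp [hKe])).le)
    exact absurd this (not_le.mpr hβ2)
  have hcont : Continuous fun z => φ (F z) (G z) :=
    hφc.comp (F.continuous.prodMk G.continuous)
  obtain ⟨z₀, hz₀K, hz₀max⟩ := hKc.exists_isMaxOn hKne hcont.continuousOn
  have hle : c ≤ max (φ (F z₀) (G z₀)) β := by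
    rw [← hsup]
    refine supPhi_le fun z => ?_
    by_cases hz : z ∈ K
    · exact le_max_of_le_left (hz₀max hz)
    · exact le_max_of_le_right (houtside z hz).le
  have hcz : φ (F z₀) (G z₀) = c := by
    rcases max_cases (φ (F z₀) (G z₀)) β with ⟨he, _⟩ | ⟨he, _⟩
    · exact le_antisymm (hcap z₀) (he ▸ hle)
    · exact absurd (hle.trans_eq he) (not_le.mpr hβ2)
  -- strictness
  have hG1 : ‖G z₀‖ = 1 := by
    by_contra hne
    have hlt : ‖G z₀‖ < 1 := lt_of_le_of_ne (hG z₀) hne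
    have : φ (F z₀) (G z₀) < c :=
      lt_of_le_of_lt (mono1 hinc _ ((hF z₀).trans_eq htC.symm))
        (strict2 hinc (by simpa using hlt) htne)
    exact absurd hcz (ne_of_lt this)
  have hF1 : ‖F z₀‖ = t := by
    by_contra hne
    have hlt : ‖F z₀‖ < t := lt_of_le_of_ne (hF z₀) hne
    have hGne : G z₀ ≠ 0 := by
      intro hg
      rw [hg] at hG1
      simp at hG1
    have : φ (F z₀) (G z₀) < c :=
      lt_of_lt_of_le (strict1 hinc (by rwa [htC]) hGne)
        (mono2 hinc _ ((hG z₀).trans_eq (by simp)))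
    exact absurd hcz (ne_of_lt this)
  exact ⟨z₀, hF1, hG1⟩


theorem tchoice (hφ0 : ∀ s t : ℂ, 0 ≤ φ s t) (hinc : IncProp φ)
    (hab : (∀ t : ℝ, 0 ≤ t → φ (t : ℂ) 0 = 0 ∧ φ 0 (t : ℂ) = 0) ∨
          (∀ a : ℝ, 0 < a →
            Filter.Tendsto (fun t : ℝ => φ (t : ℂ) (a : ℂ)) Filter.atTop Filter.atTop ∧
            Filter.Tendsto (fun t : ℝ => φ (a : ℂ) (t : ℂ)) Filter.atTop Filter.atTop))
    {a M : ℝ} (ha : 0 < a) (hM : 0 ≤ M) :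
    ∃ t : ℝ, 0 < t ∧ φ (M : ℂ) 0 < φ (a : ℂ) (t : ℂ) ∧ φ 0 (M : ℂ) < φ (t : ℂ) (a : ℂ) := by
  rcases hab with hA | hB
  · refine ⟨1, one_pos, ?_, ?_⟩
    · have h1 : φ (M : ℂ) 0 = 0 := (hA M hM).1
      have h2 : φ (0 : ℂ) ((1 : ℝ) : ℂ) = 0 := (hA 1 zero_le_one).2
      rw [h1]
      calc (0 : ℝ) = φ (0 : ℂ) ((1 : ℝ) : ℂ) := h2.symm
        _ < φ (a : ℂ) ((1 : ℝ) : ℂ) := strict1 hinc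
            (by rw [absR ha.le]; simpa using ha) (by simp)
    · have h1 : φ 0 (M : ℂ) = 0 := (hA M hM).2
      have h2 : φ (((1 : ℝ)) : ℂ) (0 : ℂ) = 0 := (hA 1 zero_le_one).1
      rw [h1]
      calc (0 : ℝ) = φ (((1 : ℝ)) : ℂ) (0 : ℂ) := h2.symm
        _ < φ (((1 : ℝ)) : ℂ) (a : ℂ) := strict2 hinc
            (by rw [absR ha.le]; simpa using ha) (by simp)
  · obtain ⟨hb1, hb2⟩ := hB a ha
    have e1 : ∀ᶠ t : ℝ in atTop, φ (M : ℂ) 0 < φ (a : ℂ) (t : ℂ) :=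
      hb2.eventually_gt_atTop _
    have e2 : ∀ᶠ t : ℝ in atTop, φ 0 (M : ℂ) < φ (t : ℂ) (a : ℂ) :=
      hb1.eventually_gt_atTop _
    have e3 : ∀ᶠ t : ℝ in atTop, 0 < t := eventually_gt_atTop 0
    obtain ⟨t, ht1, ht2⟩ := ((e3.and e1).and e2).exists
    exact ⟨t, ht1.1, ht1.2, ht2⟩

theorem epschoice (hφc : Continuous fun p : ℂ × ℂ => φ p.1 p.2)
    {M t C1 C2 : ℝ} (ht : 0 < t)
    (h1 : φ (M : ℂ) 0 < C1) (h2 : φ 0 (M : ℂ) < C2) :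
    ∃ ε : ℝ, 0 < ε ∧ φ (M : ℂ) (((t * ε : ℝ)) : ℂ) < C1 ∧
      φ (((t * ε : ℝ)) : ℂ) (M : ℂ) < C2 := by
  have hc1 : Continuous fun e : ℝ => φ (M : ℂ) (((t * e : ℝ)) : ℂ) :=
    hφc.comp (continuous_const.prodMk
      (Complex.continuous_ofReal.comp (continuous_const.mul continuous_id)))
  have hc2 : Continuous fun e : ℝ => φ (((t * e : ℝ)) : ℂ) (M : ℂ) :=
    hφc.comp ((Complex.continuous_ofReal.comp
      (continuous_const.mul continuous_id)).prodMk continuous_const)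
  have hv1 : (fun e : ℝ => φ (M : ℂ) (((t * e : ℝ)) : ℂ)) 0 < C1 := by simpa using h1
  have hv2 : (fun e : ℝ => φ (((t * e : ℝ)) : ℂ) (M : ℂ)) 0 < C2 := by simpa using h2
  have e1 : ∀ᶠ e : ℝ in 𝓝 0, φ (M : ℂ) (((t * e : ℝ)) : ℂ) < C1 :=
    (hc1.continuousAt).eventually_lt continuousAt_const hv1
  have e2 : ∀ᶠ e : ℝ in 𝓝 0, φ (((t * e : ℝ)) : ℂ) (M : ℂ) < C2 :=
    (hc2.continuousAt).eventually_lt continuousAt_const hv2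
  have e3 : ∀ᶠ e : ℝ in 𝓝[>] (0 : ℝ), (φ (M : ℂ) (((t * e : ℝ)) : ℂ) < C1 ∧
      φ (((t * e : ℝ)) : ℂ) (M : ℂ) < C2) ∧ 0 < e :=
    (((e1.and e2).filter_mono nhdsWithin_le_nhds).and
      (eventually_mem_nhdsWithin.mono fun e he => he))
  obtain ⟨ε, ⟨hε1, hε2⟩, hε3⟩ := e3.exists
  exact ⟨ε, hε3, hε1, hε2⟩

end Stmt13Aux

theorem stmt13 {X Y : Type*} [TopologicalSpace X] [LocallyCompactSpace X] [T2Space X] [TopologicalSpace Y] [LocallyCompactSpace Y] [T2Space Y]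
    (φ : ℂ → ℂ → ℝ) (hφc : Continuous fun p : ℂ × ℂ => φ p.1 p.2)
    (hφ0 : ∀ s t : ℂ, 0 ≤ φ s t) (hinc : IncProp φ) (hcon : ConProp φ)
    (A : Set C₀(X, ℂ)) (B : Set C₀(Y, ℂ))
    (hA : (∃ S : Submodule ℂ C₀(X, ℂ), A = (S : Set C₀(X, ℂ))) ∨
          (∃ S : Submodule ℂ C₀(X, ℂ), A = _root_.posPart (S : Set C₀(X, ℂ))))
    (hB : (∃ S : Submodule ℂ C₀(Y, ℂ), B = (S : Set C₀(Y, ℂ))) ∨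
          (∃ S : Submodule ℂ C₀(Y, ℂ), B = _root_.posPart (S : Set C₀(Y, ℂ))))
    (𝒜 : NonUnitalSubalgebra ℂ C₀(X, ℂ)) (ℬ : NonUnitalSubalgebra ℂ C₀(Y, ℂ))
    (h𝒜 : IsFunctionAlgebra 𝒜) (hℬ : IsFunctionAlgebra ℬ)
    (hbd𝒜 : ∀ x : X, IsStrongBoundaryPoint A x ↔ InChoquetBoundary 𝒜.toSubmodule x)
    (hbdℬ : ∀ y : Y, IsStrongBoundaryPoint B y ↔ InChoquetBoundary ℬ.toSubmodule y)
    (hmodA : ModulusSubset A (𝒜 : Set C₀(X, ℂ)))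
    (hmodB : ModulusSubset B (ℬ : Set C₀(Y, ℂ)))
    (T : C₀(X, ℂ) → C₀(Y, ℂ)) (hTmaps : Set.MapsTo T A B) (hTsurj : Set.SurjOn T A B)
    (hT : ∀ f ∈ A, ∀ g ∈ A,
      rhoPlus φ (fun y => T f y) (fun y => T g y) =
        rhoPlus φ (fun x => f x) (fun x => g x))
    (hab : (∀ t : ℝ, 0 ≤ t → φ (t : ℂ) 0 = 0 ∧ φ 0 (t : ℂ) = 0) ∨
          (∀ a : ℝ, 0 < a →
            Filter.Tendsto (fun t : ℝ => φ (t : ℂ) (a : ℂ)) Filter.atTop Filter.atTop ∧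
            Filter.Tendsto (fun t : ℝ => φ (a : ℂ) (t : ℂ)) Filter.atTop Filter.atTop))
    (y₀ : Y) (hy₀ : InChoquetBoundary ℬ.toSubmodule y₀)
    (x₀ : X) (hx₀ : InChoquetBoundary 𝒜.toSubmodule x₀)
    (hsingle : (⋂ f ∈ {f : C₀(X, ℂ) | f ∈ A ∧ T f ∈ (1 : ℂ) • Vset B y₀}, maxSet f) ∩ {x : X | InChoquetBoundary 𝒜.toSubmodule x} = {x₀}) :
    ∀ f ∈ A, ‖T f y₀‖ = ‖f x₀‖ := by
  open Stmt13Aux in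
  intro f hf
  haveI : Nonempty X := ⟨x₀⟩
  haveI : Nonempty Y := ⟨y₀⟩
  clear hcon hmodA hmodB h𝒜 hℬ hTmaps
  have habs1 : ‖(1 : ℂ)‖ = 1 := by simp
  have SBy : IsStrongBoundaryPoint B y₀ := (hbdℬ y₀).mpr hy₀
  have SBx : IsStrongBoundaryPoint A x₀ := (hbd𝒜 x₀).mpr hx₀
  -- positive real scalar multiples stay in A and B
  have hAsmul : ∀ t : ℝ, 0 < t → ∀ g, g ∈ A → ((t : ℂ) • g) ∈ A := by
    intro t ht g hg
    rcases hA with ⟨S, hS⟩ | ⟨S, hS⟩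
    · rw [hS] at hg ⊢; exact S.smul_mem _ hg
    · rw [hS] at hg ⊢
      refine ⟨S.smul_mem _ hg.1, fun x => ?_⟩
      obtain ⟨a, ha0, hax⟩ := hg.2 x
      refine ⟨t * a, mul_nonneg ht.le ha0, ?_⟩
      show ((t : ℂ) • g) x = ((t * a : ℝ) : ℂ)
      simp [hax]
  have hBsmul : ∀ t : ℝ, 0 < t → ∀ g, g ∈ B → ((t : ℂ) • g) ∈ B := by
    intro t ht g hg
    rcases hB with ⟨S, hS⟩ | ⟨S, hS⟩
    · rw [hS] at hg ⊢; exact S.smul_mem _ hg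
    · rw [hS] at hg ⊢
      refine ⟨S.smul_mem _ hg.1, fun x => ?_⟩
      obtain ⟨a, ha0, hax⟩ := hg.2 x
      refine ⟨t * a, mul_nonneg ht.le ha0, ?_⟩
      show ((t : ℂ) • g) x = ((t * a : ℝ) : ℂ)
      simp [hax]
  -- the norm of a nonnegative real scalar multiple
  have hnsmulX : ∀ t : ℝ, 0 ≤ t → ∀ g : C₀(X, ℂ), ‖(t : ℂ) • g‖ = t * ‖g‖ := by
    intro t ht g
    rw [norm_smul ((t : ℝ) : ℂ) g, absR ht]
  have hnsmulY : ∀ t : ℝ, 0 ≤ t → ∀ g : C₀(Y, ℂ), ‖(t : ℂ) • g‖ = t * ‖g‖ := by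
    intro t ht g
    rw [norm_smul ((t : ℝ) : ℂ) g, absR ht]
  -- strict monotonicity of a ↦ φ(a,a)
  have chist : ∀ a b : ℝ, 0 ≤ a → a < b → φ (a : ℂ) (a : ℂ) < φ (b : ℂ) (b : ℂ) := by
    intro a b ha hab
    have hb0 : 0 < b := ha.trans_lt hab
    have habsab : ‖(a : ℂ)‖ ≤ ‖(b : ℂ)‖ := by
      rw [absR ha, absR hb0.le]; exact hab.le
    refine lt_of_le_of_lt (mono1 hinc _ habsab) (strict2 hinc ?_ ?_)
    · rw [absR ha, absR hb0.le]; exact hab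
    · simpa using hb0.ne'
  -- T preserves norms
  have hnorm : ∀ g, g ∈ A → ‖T g‖ = ‖g‖ := by
    intro g hg
    have h := hT g hg g hg
    have h1 := supPhi_self (φ := φ) hφc hinc (T g)
    have h2 := supPhi_self (φ := φ) hφc hinc g
    have heq : φ (‖T g‖ : ℂ) (‖T g‖ : ℂ) = φ (‖g‖ : ℂ) (‖g‖ : ℂ) := by
      unfold rhoPlus at h
      rw [h1, h2] at h
      linarith
    by_contra hne
    rcases lt_or_gt_of_ne hne with hlt | hlt
    · exact absurd heq (ne_of_lt (chist _ _ (norm_nonneg _) hlt))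
    · exact absurd heq.symm (ne_of_lt (chist _ _ (norm_nonneg _) hlt))
  -- the common maximizer property from hsingle
  have hx₀max : ∀ h : C₀(X, ℂ), h ∈ A → T h ∈ (1 : ℂ) • Vset B y₀ →
      ‖h x₀‖ = ‖h‖ := by
    intro h hhA hhV
    have hx : x₀ ∈ (⋂ f ∈ {f : C₀(X, ℂ) | f ∈ A ∧ T f ∈ (1 : ℂ) • Vset B y₀}, maxSet f) ∩
        {x : X | InChoquetBoundary 𝒜.toSubmodule x} := by
      rw [hsingle]; rfl
    exact Set.mem_iInter₂.mp hx.1 h ⟨hhA, hhV⟩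
  -- pulled-back peaking functions at y₀
  have hD : ∀ V ∈ 𝓝 y₀, ∀ ε : ℝ, 0 < ε → ∃ h : C₀(X, ℂ), h ∈ A ∧ T h y₀ = 1 ∧
      ‖T h‖ = 1 ∧ (∀ y ∉ V, ‖T h y‖ < ε) ∧ ‖h‖ = 1 ∧
      ‖h x₀‖ = 1 := by
    intro V hV ε hε
    obtain ⟨k, hkB, hk1, hkn, hks⟩ := SBy ε hε V hV
    obtain ⟨h, hhA, hTh⟩ := hTsurj hkB
    have hVmem : T h ∈ (1 : ℂ) • Vset B y₀ :=
      Set.mem_smul_set.mpr ⟨k, ⟨hkB, hk1, hkn⟩, by rw [one_smul, hTh]⟩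
    have hn : ‖h‖ = 1 := by rw [← hnorm h hhA, hTh]; exact hkn
    exact ⟨h, hhA, by rw [hTh]; exact hk1, by rw [hTh]; exact hkn,
      fun y hy => by rw [hTh]; exact hks y hy, hn, by rw [hx₀max h hhA hVmem, hn]⟩
  -- Lemma P: peaks at x₀ transfer to y₀
  have hP : ∀ t : ℝ, 0 < t → ∀ u, u ∈ A → ‖u x₀‖ = t → ‖u‖ = t →
      ‖T u y₀‖ = t := by
    intro t ht u huA hux hun
    have hTun : ‖T u‖ = t := by rw [hnorm u huA, hun]
    have hcl : IsClosed {y : Y | ‖T u y‖ = t} :=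
      isClosed_eq (continuous_norm.comp (T u).continuous) continuous_const
    have hmem : y₀ ∈ closure {y : Y | ‖T u y‖ = t} := by
      rw [mem_closure_iff_nhds]
      intro V hV
      obtain ⟨h, hhA, hh1, hhTn, hhs, hhn, hhx⟩ := hD V hV (1 / 2) (by norm_num)
      have capX1 : ∀ x, φ (u x) (h x) ≤ φ (t : ℂ) 1 := fun x =>
        (mono1 hinc _ ((abs_le_norm u x).trans_eq (hun.trans (absR ht.le).symm))).trans
          (mono2 hinc _ ((abs_le_norm h x).trans_eq (hhn.trans habs1.symm)))
      have capX2 : ∀ x, φ (h x) (u x) ≤ φ 1 (t : ℂ) := fun x =>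
        (mono1 hinc _ ((abs_le_norm h x).trans_eq (hhn.trans habs1.symm))).trans
          (mono2 hinc _ ((abs_le_norm u x).trans_eq (hun.trans (absR ht.le).symm)))
      have e1 : φ (u x₀) (h x₀) = φ (t : ℂ) 1 :=
        phi_congr hinc (by rw [hux, absR ht.le]) (by rw [hhx, habs1])
      have e2 : φ (h x₀) (u x₀) = φ 1 (t : ℂ) :=
        phi_congr hinc (by rw [hhx, habs1]) (by rw [hux, absR ht.le])
      have lowsum : φ (t : ℂ) 1 + φ 1 (t : ℂ) ≤
          rhoPlus φ (fun x => u x) (fun x => h x) := by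
        calc φ (t : ℂ) 1 + φ 1 (t : ℂ) = φ (u x₀) (h x₀) + φ (h x₀) (u x₀) := by
              rw [e1, e2]
          _ ≤ supPhi φ (fun x => u x) (fun x => h x) +
              supPhi φ (fun x => h x) (fun x => u x) :=
              add_le_add (le_supPhi capX1 x₀) (le_supPhi capX2 x₀)
          _ = rhoPlus φ (fun x => u x) (fun x => h x) := rfl
      have upsum : rhoPlus φ (fun x => u x) (fun x => h x) ≤
          φ (t : ℂ) 1 + φ 1 (t : ℂ) :=
        add_le_add (supPhi_le capX1) (supPhi_le capX2)
      have hrEq : rhoPlus φ (fun y => T u y) (fun y => T h y) =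
          φ (t : ℂ) 1 + φ 1 (t : ℂ) := by
        rw [hT u huA h hhA]
        exact le_antisymm upsum lowsum
      have capY1 : ∀ y, φ (T u y) (T h y) ≤ φ (t : ℂ) 1 := fun y =>
        (mono1 hinc _ ((abs_le_norm (T u) y).trans_eq (hTun.trans (absR ht.le).symm))).trans
          (mono2 hinc _ ((abs_le_norm (T h) y).trans_eq (hhTn.trans habs1.symm)))
      have capY2 : ∀ y, φ (T h y) (T u y) ≤ φ 1 (t : ℂ) := fun y =>
        (mono1 hinc _ ((abs_le_norm (T h) y).trans_eq (hhTn.trans habs1.symm))).trans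
          (mono2 hinc _ ((abs_le_norm (T u) y).trans_eq (hTun.trans (absR ht.le).symm)))
      have hsup1 : supPhi φ (fun y => T u y) (fun y => T h y) = φ (t : ℂ) 1 := by
        have a1 : supPhi φ (fun y => T u y) (fun y => T h y) ≤ φ (t : ℂ) 1 :=
          supPhi_le capY1
        have a2 : supPhi φ (fun y => T h y) (fun y => T u y) ≤ φ 1 (t : ℂ) :=
          supPhi_le capY2
        unfold rhoPlus at hrEq
        linarith
      obtain ⟨y₁, hy1, hy2⟩ := attain hφc hinc (T u) (T h) ht
        (fun y => (abs_le_norm (T u) y).trans_eq hTun)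
        (fun y => (abs_le_norm (T h) y).trans_eq hhTn) hsup1
      have hyV : y₁ ∈ V := by
        by_contra hnot
        have := hhs y₁ hnot
        rw [hy2] at this
        norm_num at this
      exact ⟨y₁, hyV, hy1⟩
    exact hcl.closure_subset hmem
  -- Lemma Q: peaks of T-images at y₀ transfer back to x₀
  have hQ : ∀ t : ℝ, 0 < t → ∀ h, h ∈ A → ‖T h y₀‖ = t → ‖T h‖ = t →
      ‖h x₀‖ = t := by
    intro t ht h hhA hTy hTn
    have hhn : ‖h‖ = t := by rw [← hnorm h hhA]; exact hTn
    have hcl : IsClosed {x : X | ‖h x‖ = t} :=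
      isClosed_eq (continuous_norm.comp h.continuous) continuous_const
    have hmem : x₀ ∈ closure {x : X | ‖h x‖ = t} := by
      rw [mem_closure_iff_nhds]
      intro V hV
      obtain ⟨u, huA, hu1, hun, hus⟩ := SBx (1 / 2) (by norm_num) V hV
      have hux : ‖u x₀‖ = 1 := by rw [hu1, habs1]
      have hTu1 : ‖T u y₀‖ = 1 := hP 1 one_pos u huA hux hun
      have hTun : ‖T u‖ = 1 := by rw [hnorm u huA]; exact hun
      have capY1 : ∀ y, φ (T h y) (T u y) ≤ φ (t : ℂ) 1 := fun y =>
        (mono1 hinc _ ((abs_le_norm (T h) y).trans_eq (hTn.trans (absR ht.le).symm))).trans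
          (mono2 hinc _ ((abs_le_norm (T u) y).trans_eq (hTun.trans habs1.symm)))
      have capY2 : ∀ y, φ (T u y) (T h y) ≤ φ 1 (t : ℂ) := fun y =>
        (mono1 hinc _ ((abs_le_norm (T u) y).trans_eq (hTun.trans habs1.symm))).trans
          (mono2 hinc _ ((abs_le_norm (T h) y).trans_eq (hTn.trans (absR ht.le).symm)))
      have e1 : φ (T h y₀) (T u y₀) = φ (t : ℂ) 1 :=
        phi_congr hinc (by rw [hTy, absR ht.le]) (by rw [hTu1, habs1])
      have e2 : φ (T u y₀) (T h y₀) = φ 1 (t : ℂ) :=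
        phi_congr hinc (by rw [hTu1, habs1]) (by rw [hTy, absR ht.le])
      have lowsum : φ (t : ℂ) 1 + φ 1 (t : ℂ) ≤
          rhoPlus φ (fun y => T h y) (fun y => T u y) := by
        calc φ (t : ℂ) 1 + φ 1 (t : ℂ) = φ (T h y₀) (T u y₀) + φ (T u y₀) (T h y₀) := by
              rw [e1, e2]
          _ ≤ supPhi φ (fun y => T h y) (fun y => T u y) +
              supPhi φ (fun y => T u y) (fun y => T h y) :=
              add_le_add (le_supPhi capY1 y₀) (le_supPhi capY2 y₀)
          _ = rhoPlus φ (fun y => T h y) (fun y => T u y) := rfl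
      have upsum : rhoPlus φ (fun y => T h y) (fun y => T u y) ≤
          φ (t : ℂ) 1 + φ 1 (t : ℂ) :=
        add_le_add (supPhi_le capY1) (supPhi_le capY2)
      have hrEq : rhoPlus φ (fun x => h x) (fun x => u x) =
          φ (t : ℂ) 1 + φ 1 (t : ℂ) := by
        rw [← hT h hhA u huA]
        exact le_antisymm upsum lowsum
      have capX1 : ∀ x, φ (h x) (u x) ≤ φ (t : ℂ) 1 := fun x =>
        (mono1 hinc _ ((abs_le_norm h x).trans_eq (hhn.trans (absR ht.le).symm))).trans
          (mono2 hinc _ ((abs_le_norm u x).trans_eq (hun.trans habs1.symm)))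
      have capX2 : ∀ x, φ (u x) (h x) ≤ φ 1 (t : ℂ) := fun x =>
        (mono1 hinc _ ((abs_le_norm u x).trans_eq (hun.trans habs1.symm))).trans
          (mono2 hinc _ ((abs_le_norm h x).trans_eq (hhn.trans (absR ht.le).symm)))
      have hsup1 : supPhi φ (fun x => h x) (fun x => u x) = φ (t : ℂ) 1 := by
        have a1 : supPhi φ (fun x => h x) (fun x => u x) ≤ φ (t : ℂ) 1 :=
          supPhi_le capX1
        have a2 : supPhi φ (fun x => u x) (fun x => h x) ≤ φ 1 (t : ℂ) :=
          supPhi_le capX2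
        unfold rhoPlus at hrEq
        linarith
      obtain ⟨x₁, hx1, hx2⟩ := attain hφc hinc h u ht
        (fun x => (abs_le_norm h x).trans_eq hhn)
        (fun x => (abs_le_norm u x).trans_eq hun) hsup1
      have hxV : x₁ ∈ V := by
        by_contra hnot
        have := hus x₁ hnot
        rw [hx2] at this
        norm_num at this
      exact ⟨x₁, hxV, hx1⟩
    exact hcl.closure_subset hmem
  -- main argument
  refine le_antisymm ?_ ?_
  · -- |Tf(y₀)| ≤ |f(x₀)|
    by_contra hcon'
    push_neg at hcon'
    set r := ‖f x₀‖ with hrdef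
    set s := ‖T f y₀‖ with hsdef
    have hs : 0 < s := (norm_nonneg _).trans_lt hcon'
    obtain ⟨t, ht0, htA, htB⟩ := tchoice hφ0 hinc hab hs (norm_nonneg f)
    obtain ⟨ε, hε0, hεA, hεB⟩ := epschoice hφc ht0 htA htB
    set m := (r + s) / 2 with hmdef
    have hm1 : r < m := by simp only [hmdef]; linarith
    have hm2 : m < s := by simp only [hmdef]; linarith
    have hm0 : 0 ≤ m := le_of_lt ((norm_nonneg _).trans_lt hm1)
    set V := {x : X | ‖f x‖ < m} with hVdef
    have hVo : IsOpen V :=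
      isOpen_lt (continuous_norm.comp f.continuous) continuous_const
    have hVx : x₀ ∈ V := hm1
    obtain ⟨u, huA, hu1, hun, hus⟩ := SBx ε hε0 V (hVo.mem_nhds hVx)
    set u' := (t : ℂ) • u with hu'def
    have hu'A : u' ∈ A := hAsmul t ht0 u huA
    have hu'x : ‖u' x₀‖ = t := by
      simp only [hu'def]
      simp [hu1, absR ht0.le, ht0.le]
    have hu'n : ‖u'‖ = t := by rw [hu'def, hnsmulX t ht0.le u, hun, mul_one]
    have hu'abs : ∀ x, ‖u' x‖ = t * ‖u x‖ := by
      intro x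
      simp only [hu'def]
      simp [absR ht0.le, ht0.le]
    have hTu : ‖T u' y₀‖ = t := hP t ht0 u' hu'A hu'x hu'n
    have hTu'n : ‖T u'‖ = t := by rw [hnorm u' hu'A]; exact hu'n
    -- lower bound at y₀
    have capY1 : ∀ y, φ (T f y) (T u' y) ≤ φ (‖T f‖ : ℂ) (t : ℂ) := fun y =>
      (mono1 hinc _ ((abs_le_norm (T f) y).trans_eq (absR (norm_nonneg _)).symm)).trans
        (mono2 hinc _ ((abs_le_norm (T u') y).trans_eq (hTu'n.trans (absR ht0.le).symm)))
    have capY2 : ∀ y, φ (T u' y) (T f y) ≤ φ (t : ℂ) (‖T f‖ : ℂ) := fun y =>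
      (mono1 hinc _ ((abs_le_norm (T u') y).trans_eq (hTu'n.trans (absR ht0.le).symm))).trans
        (mono2 hinc _ ((abs_le_norm (T f) y).trans_eq (absR (norm_nonneg _)).symm))
    have e1 : φ (T f y₀) (T u' y₀) = φ (s : ℂ) (t : ℂ) :=
      phi_congr hinc (by rw [← hsdef, absR hs.le]) (by rw [hTu, absR ht0.le])
    have e2 : φ (T u' y₀) (T f y₀) = φ (t : ℂ) (s : ℂ) :=
      phi_congr hinc (by rw [hTu, absR ht0.le]) (by rw [← hsdef, absR hs.le])
    have low : φ (s : ℂ) (t : ℂ) + φ (t : ℂ) (s : ℂ) ≤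
        rhoPlus φ (fun y => T f y) (fun y => T u' y) := by
      calc φ (s : ℂ) (t : ℂ) + φ (t : ℂ) (s : ℂ)
          = φ (T f y₀) (T u' y₀) + φ (T u' y₀) (T f y₀) := by rw [e1, e2]
        _ ≤ supPhi φ (fun y => T f y) (fun y => T u' y) +
            supPhi φ (fun y => T u' y) (fun y => T f y) :=
            add_le_add (le_supPhi capY1 y₀) (le_supPhi capY2 y₀)
        _ = rhoPlus φ (fun y => T f y) (fun y => T u' y) := rfl
    -- upper bounds on the X side
    have up1 : supPhi φ (fun x => f x) (fun x => u' x) ≤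
        max (φ (m : ℂ) (t : ℂ)) (φ (‖f‖ : ℂ) (((t * ε : ℝ)) : ℂ)) := by
      refine supPhi_le fun x => ?_
      by_cases hx : x ∈ V
      · refine le_max_of_le_left ((mono1 hinc _ ?_).trans (mono2 hinc _ ?_))
        · exact (le_of_lt hx).trans_eq (absR hm0).symm
        · rw [hu'abs x]
          refine le_trans ?_ (absR ht0.le).symm.le
          calc t * ‖u x‖ ≤ t * 1 :=
                mul_le_mul_of_nonneg_left ((abs_le_norm u x).trans_eq hun) ht0.le
            _ = t := mul_one t
      · refine le_max_of_le_right ((mono1 hinc _ ?_).trans (mono2 hinc _ ?_))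
        · exact (abs_le_norm f x).trans_eq (absR (norm_nonneg _)).symm
        · rw [hu'abs x]
          refine le_trans ?_ (absR (by positivity : (0:ℝ) ≤ t * ε)).symm.le
          exact mul_le_mul_of_nonneg_left (le_of_lt (hus x hx)) ht0.le
    have up2 : supPhi φ (fun x => u' x) (fun x => f x) ≤
        max (φ (t : ℂ) (m : ℂ)) (φ (((t * ε : ℝ)) : ℂ) (‖f‖ : ℂ)) := by
      refine supPhi_le fun x => ?_
      by_cases hx : x ∈ V
      · refine le_max_of_le_left ((mono1 hinc _ ?_).trans (mono2 hinc _ ?_))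
        · rw [hu'abs x]
          refine le_trans ?_ (absR ht0.le).symm.le
          calc t * ‖u x‖ ≤ t * 1 :=
                mul_le_mul_of_nonneg_left ((abs_le_norm u x).trans_eq hun) ht0.le
            _ = t := mul_one t
        · exact (le_of_lt hx).trans_eq (absR hm0).symm
      · refine le_max_of_le_right ((mono1 hinc _ ?_).trans (mono2 hinc _ ?_))
        · rw [hu'abs x]
          refine le_trans ?_ (absR (by positivity : (0:ℝ) ≤ t * ε)).symm.le
          exact mul_le_mul_of_nonneg_left (le_of_lt (hus x hx)) ht0.le
        · exact (abs_le_norm f x).trans_eq (absR (norm_nonneg _)).symm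
    have ht0' : ((t : ℝ) : ℂ) ≠ 0 := by simpa using ht0.ne'
    have hmax1 : max (φ (m : ℂ) (t : ℂ)) (φ (‖f‖ : ℂ) (((t * ε : ℝ)) : ℂ)) <
        φ (s : ℂ) (t : ℂ) := by
      refine max_lt (strict1 hinc ?_ ht0') hεA
      rw [absR hm0, absR hs.le]; exact hm2
    have hmax2 : max (φ (t : ℂ) (m : ℂ)) (φ (((t * ε : ℝ)) : ℂ) (‖f‖ : ℂ)) <
        φ (t : ℂ) (s : ℂ) := by
      refine max_lt (strict2 hinc ?_ ht0') hεB
      rw [absR hm0, absR hs.le]; exact hm2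
    have hrr := hT f hf u' hu'A
    have hfinal : φ (s : ℂ) (t : ℂ) + φ (t : ℂ) (s : ℂ) ≤
        supPhi φ (fun x => f x) (fun x => u' x) +
        supPhi φ (fun x => u' x) (fun x => f x) := by
      have := low.trans_eq hrr
      unfold rhoPlus at this
      linarith
    have : φ (s : ℂ) (t : ℂ) + φ (t : ℂ) (s : ℂ) <
        φ (s : ℂ) (t : ℂ) + φ (t : ℂ) (s : ℂ) := by
      calc φ (s : ℂ) (t : ℂ) + φ (t : ℂ) (s : ℂ)
          ≤ supPhi φ (fun x => f x) (fun x => u' x) +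
            supPhi φ (fun x => u' x) (fun x => f x) := hfinal
        _ ≤ max (φ (m : ℂ) (t : ℂ)) (φ (‖f‖ : ℂ) (((t * ε : ℝ)) : ℂ)) +
            max (φ (t : ℂ) (m : ℂ)) (φ (((t * ε : ℝ)) : ℂ) (‖f‖ : ℂ)) :=
            add_le_add up1 up2
        _ < _ := add_lt_add hmax1 hmax2
    exact absurd this (lt_irrefl _)
  · -- |f(x₀)| ≤ |Tf(y₀)|
    by_contra hcon'
    push_neg at hcon'
    set r := ‖f x₀‖ with hrdef
    set s := ‖T f y₀‖ with hsdef
    have hr : 0 < r := (norm_nonneg _).trans_lt hcon'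
    obtain ⟨t, ht0, htA, htB⟩ := tchoice hφ0 hinc hab hr (norm_nonneg (T f))
    obtain ⟨ε, hε0, hεA, hεB⟩ := epschoice hφc ht0 htA htB
    set m := (r + s) / 2 with hmdef
    have hm1 : s < m := by simp only [hmdef]; linarith
    have hm2 : m < r := by simp only [hmdef]; linarith
    have hm0 : 0 ≤ m := le_of_lt ((norm_nonneg _).trans_lt hm1)
    set V := {y : Y | ‖T f y‖ < m} with hVdef
    have hVo : IsOpen V :=
      isOpen_lt (continuous_norm.comp (T f).continuous) continuous_const
    have hVy : y₀ ∈ V := hm1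
    obtain ⟨k, hkB, hk1, hkn, hks⟩ := SBy ε hε0 V (hVo.mem_nhds hVy)
    set k' := (t : ℂ) • k with hk'def
    have hk'B : k' ∈ B := hBsmul t ht0 k hkB
    obtain ⟨h, hhA, hTh⟩ := hTsurj hk'B
    have hk'n : ‖k'‖ = t := by rw [hk'def, hnsmulY t ht0.le k, hkn, mul_one]
    have hk'abs : ∀ y, ‖k' y‖ = t * ‖k y‖ := by
      intro y
      simp only [hk'def]
      simp [absR ht0.le, ht0.le]
    have hTy : ‖T h y₀‖ = t := by
      rw [hTh, hk'abs y₀, hk1, habs1, mul_one]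
    have hTn : ‖T h‖ = t := by rw [hTh]; exact hk'n
    have hhx : ‖h x₀‖ = t := hQ t ht0 h hhA hTy hTn
    have hhn : ‖h‖ = t := by rw [← hnorm h hhA]; exact hTn
    -- lower bound at x₀
    have capX1 : ∀ x, φ (f x) (h x) ≤ φ (‖f‖ : ℂ) (t : ℂ) := fun x =>
      (mono1 hinc _ ((abs_le_norm f x).trans_eq (absR (norm_nonneg _)).symm)).trans
        (mono2 hinc _ ((abs_le_norm h x).trans_eq (hhn.trans (absR ht0.le).symm)))
    have capX2 : ∀ x, φ (h x) (f x) ≤ φ (t : ℂ) (‖f‖ : ℂ) := fun x =>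
      (mono1 hinc _ ((abs_le_norm h x).trans_eq (hhn.trans (absR ht0.le).symm))).trans
        (mono2 hinc _ ((abs_le_norm f x).trans_eq (absR (norm_nonneg _)).symm))
    have e1 : φ (f x₀) (h x₀) = φ (r : ℂ) (t : ℂ) :=
      phi_congr hinc (by rw [← hrdef, absR hr.le]) (by rw [hhx, absR ht0.le])
    have e2 : φ (h x₀) (f x₀) = φ (t : ℂ) (r : ℂ) :=
      phi_congr hinc (by rw [hhx, absR ht0.le]) (by rw [← hrdef, absR hr.le])
    have low : φ (r : ℂ) (t : ℂ) + φ (t : ℂ) (r : ℂ) ≤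
        rhoPlus φ (fun x => f x) (fun x => h x) := by
      calc φ (r : ℂ) (t : ℂ) + φ (t : ℂ) (r : ℂ)
          = φ (f x₀) (h x₀) + φ (h x₀) (f x₀) := by rw [e1, e2]
        _ ≤ supPhi φ (fun x => f x) (fun x => h x) +
            supPhi φ (fun x => h x) (fun x => f x) :=
            add_le_add (le_supPhi capX1 x₀) (le_supPhi capX2 x₀)
        _ = rhoPlus φ (fun x => f x) (fun x => h x) := rfl
    -- upper bounds on the Y side
    have hTfn : ‖T f‖ = ‖f‖ := hnorm f hf
    have up1 : supPhi φ (fun y => T f y) (fun y => T h y) ≤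
        max (φ (m : ℂ) (t : ℂ)) (φ (‖T f‖ : ℂ) (((t * ε : ℝ)) : ℂ)) := by
      refine supPhi_le fun y => ?_
      by_cases hy : y ∈ V
      · refine le_max_of_le_left ((mono1 hinc _ ?_).trans (mono2 hinc _ ?_))
        · exact (le_of_lt hy).trans_eq (absR hm0).symm
        · rw [hTh, hk'abs y]
          refine le_trans ?_ (absR ht0.le).symm.le
          calc t * ‖k y‖ ≤ t * 1 :=
                mul_le_mul_of_nonneg_left ((abs_le_norm k y).trans_eq hkn) ht0.le
            _ = t := mul_one t
      · refine le_max_of_le_right ((mono1 hinc _ ?_).trans (mono2 hinc _ ?_))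
        · exact (abs_le_norm (T f) y).trans_eq (absR (norm_nonneg _)).symm
        · rw [hTh, hk'abs y]
          refine le_trans ?_ (absR (by positivity : (0:ℝ) ≤ t * ε)).symm.le
          exact mul_le_mul_of_nonneg_left (le_of_lt (hks y hy)) ht0.le
    have up2 : supPhi φ (fun y => T h y) (fun y => T f y) ≤
        max (φ (t : ℂ) (m : ℂ)) (φ (((t * ε : ℝ)) : ℂ) (‖T f‖ : ℂ)) := by
      refine supPhi_le fun y => ?_
      by_cases hy : y ∈ V
      · refine le_max_of_le_left ((mono1 hinc _ ?_).trans (mono2 hinc _ ?_))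
        · rw [hTh, hk'abs y]
          refine le_trans ?_ (absR ht0.le).symm.le
          calc t * ‖k y‖ ≤ t * 1 :=
                mul_le_mul_of_nonneg_left ((abs_le_norm k y).trans_eq hkn) ht0.le
            _ = t := mul_one t
        · exact (le_of_lt hy).trans_eq (absR hm0).symm
      · refine le_max_of_le_right ((mono1 hinc _ ?_).trans (mono2 hinc _ ?_))
        · rw [hTh, hk'abs y]
          refine le_trans ?_ (absR (by positivity : (0:ℝ) ≤ t * ε)).symm.le
          exact mul_le_mul_of_nonneg_left (le_of_lt (hks y hy)) ht0.le
        · exact (abs_le_norm (T f) y).trans_eq (absR (norm_nonneg _)).symm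
    have ht0' : ((t : ℝ) : ℂ) ≠ 0 := by simpa using ht0.ne'
    have hmax1 : max (φ (m : ℂ) (t : ℂ)) (φ (‖T f‖ : ℂ) (((t * ε : ℝ)) : ℂ)) <
        φ (r : ℂ) (t : ℂ) := by
      refine max_lt (strict1 hinc ?_ ht0') hεA
      rw [absR hm0, absR hr.le]; exact hm2
    have hmax2 : max (φ (t : ℂ) (m : ℂ)) (φ (((t * ε : ℝ)) : ℂ) (‖T f‖ : ℂ)) <
        φ (t : ℂ) (r : ℂ) := by
      refine max_lt (strict2 hinc ?_ ht0') hεB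
      rw [absR hm0, absR hr.le]; exact hm2
    have hrr := hT f hf h hhA
    have hfinal : φ (r : ℂ) (t : ℂ) + φ (t : ℂ) (r : ℂ) ≤
        supPhi φ (fun y => T f y) (fun y => T h y) +
        supPhi φ (fun y => T h y) (fun y => T f y) := by
      have := low
      rw [← hrr] at this
      unfold rhoPlus at this
      linarith
    have : φ (r : ℂ) (t : ℂ) + φ (t : ℂ) (r : ℂ) <
        φ (r : ℂ) (t : ℂ) + φ (t : ℂ) (r : ℂ) := by
      calc φ (r : ℂ) (t : ℂ) + φ (t : ℂ) (r : ℂ)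
          ≤ supPhi φ (fun y => T f y) (fun y => T h y) +
            supPhi φ (fun y => T h y) (fun y => T f y) := hfinal
        _ ≤ max (φ (m : ℂ) (t : ℂ)) (φ (‖T f‖ : ℂ) (((t * ε : ℝ)) : ℂ)) +
            max (φ (t : ℂ) (m : ℂ)) (φ (((t * ε : ℝ)) : ℂ) (‖T f‖ : ℂ)) :=
            add_le_add up1 up2
        _ < _ := add_lt_add hmax1 hmax2
    exact absurd this (lt_irrefl _)
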